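/- (Theorem 5.4, bivariate rate of convergence) Let n₁, n₂ ≥ 1 be natural numbers, 0 < q_i < p_i ≤ 1 (i = 1,2), and x, y ≥ 0. Set Δ_{n₁}(x) = (1/(p₁q₁))·L_{n₁}^{p₁,q₁}( (t/(1+t) − x/(1+x))²; x ) and Δ_{n₂}(y) = (1/(p₂q₂))·L_{n₂}^{p₂,q₂}( (s/(1+s) − y/(1+y))²; y ), where L_n^{p,q} is the univariate (p,q)-Bleimann–Butzer–Hahn operator. Then for every bivariate modulus of continuity ω₂ and every f ∈ H_{ω₂}, | L_{n₁,n₂}(f; p₁,p₂;q₁,q₂; x,y) − p₁q₁p₂q₂·f(x,y) | ≤ 4·ω̃( f; √(Δ_{n₁}(x)), √(Δ_{n₂}(y)) ). -/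

import Mathlib

open Finset Filter
open scoped Classical

noncomputable section

/-- The `(p,q)`-integer `[n]_{p,q} = (p^n - q^n)/(p - q)`. -/
def pqInt (p q : ℝ) (n : ℕ) : ℝ := (p ^ n - q ^ n) / (p - q)

/-- The `(p,q)`-factorial. -/
def pqFact (p q : ℝ) : ℕ → ℝ
  | 0 => 1
  | n + 1 => pqFact p q n * pqInt p q (n + 1)

/-- The `(p,q)`-binomial coefficient. -/
def pqBinom (p q : ℝ) (n k : ℕ) : ℝ :=
  pqFact p q n / (pqFact p q k * pqFact p q (n - k))

/-- `ℓ_n^{p,q}(x) = ∏_{s=0}^{n-1} (p^s + q^s x)`. -/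
def pqEll (p q : ℝ) (n : ℕ) (x : ℝ) : ℝ :=
  ∏ s ∈ Finset.range n, (p ^ s + q ^ s * x)

/-- The node `p^{n-k+1}[k]_{p,q} / ([n-k+1]_{p,q} q^k)`. -/
def pqNode (p q : ℝ) (n k : ℕ) : ℝ :=
  p ^ (n - k + 1) * pqInt p q k / (pqInt p q (n - k + 1) * q ^ k)

/-- The `(p,q)`-Bleimann–Butzer–Hahn operator. -/
def bbh (p q : ℝ) (n : ℕ) (f : ℝ → ℝ) (x : ℝ) : ℝ :=
  (p * q / pqEll p q n x) *
    ∑ k ∈ Finset.range (n + 1),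
      f (pqNode p q n k) * p ^ ((n - k) * (n - k - 1) / 2) *
        q ^ (k * (k - 1) / 2) * pqBinom p q n k * x ^ k

/-- `δ_n(x)` from Theorem 3.1. -/
def pqDelta (p q : ℝ) (n : ℕ) (x : ℝ) : ℝ :=
  (x / (1 + x)) ^ 2 *
      (p ^ 2 * q ^ 3 * pqInt p q n * pqInt p q (n - 1) / (pqInt p q (n + 1)) ^ 2 *
          ((1 + x) / (p + q * x)) -
        2 * p * q * pqInt p q n / pqInt p q (n + 1) + 1) +
    p ^ (n + 2) * q * pqInt p q n / (pqInt p q (n + 1)) ^ 2 * (x / (1 + x))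

/-- Statistical convergence of a real sequence. -/
def StatConv (a : ℕ → ℝ) (l : ℝ) : Prop :=
  ∀ ε > (0 : ℝ), Tendsto (fun n : ℕ =>
    (((Finset.range (n + 1)).filter (fun k => ε ≤ |a k - l|)).card : ℝ) / n)
    atTop (nhds 0)

/-- A modulus of continuity. -/
def IsModulus (ω : ℝ → ℝ) : Prop :=
  (∀ δ, 0 ≤ δ → 0 ≤ ω δ) ∧
  (∀ δ₁ δ₂, 0 ≤ δ₁ → δ₁ ≤ δ₂ → ω δ₁ ≤ ω δ₂) ∧
  (∀ δ₁ δ₂, 0 ≤ δ₁ → 0 ≤ δ₂ → ω (δ₁ + δ₂) ≤ ω δ₁ + ω δ₂) ∧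
  Tendsto ω (nhdsWithin 0 (Set.Ioi 0)) (nhds 0)

/-- Membership in the class `H_ω`. -/
def MemHomega (ω f : ℝ → ℝ) : Prop :=
  ∀ x y : ℝ, 0 ≤ x → 0 ≤ y → |f x - f y| ≤ ω |x / (1 + x) - y / (1 + y)|

/-- The modulus `ω̃(f; δ)`. -/
def omegaTilde (f : ℝ → ℝ) (δ : ℝ) : ℝ :=
  sSup {d | ∃ t x : ℝ, 0 ≤ t ∧ 0 ≤ x ∧ |t / (1 + t) - x / (1 + x)| ≤ δ ∧ d = |f t - f x|}

/-- The bivariate `(p,q)`-Bleimann–Butzer–Hahn operator. -/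
def bbh2 (p₁ p₂ q₁ q₂ : ℝ) (n₁ n₂ : ℕ) (f : ℝ → ℝ → ℝ) (x y : ℝ) : ℝ :=
  (p₁ * p₂ * q₁ * q₂ / (pqEll p₁ q₁ n₁ x * pqEll p₂ q₂ n₂ y)) *
    ∑ k₁ ∈ Finset.range (n₁ + 1), ∑ k₂ ∈ Finset.range (n₂ + 1),
      f (pqNode p₁ q₁ n₁ k₁) (pqNode p₂ q₂ n₂ k₂) *
        p₁ ^ ((n₁ - k₁) * (n₁ - k₁ - 1) / 2) * q₁ ^ (k₁ * (k₁ - 1) / 2) *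
        p₂ ^ ((n₂ - k₂) * (n₂ - k₂ - 1) / 2) * q₂ ^ (k₂ * (k₂ - 1) / 2) *
        pqBinom p₁ q₁ n₁ k₁ * pqBinom p₂ q₂ n₂ k₂ * x ^ k₁ * y ^ k₂

/-- Statistical convergence of a double real sequence (Pringsheim sense). -/
def StatConv2 (a : ℕ → ℕ → ℝ) (l : ℝ) : Prop :=
  ∀ ε > (0 : ℝ), Tendsto (fun N : ℕ × ℕ =>
    ((((Finset.range (N.1 + 1)) ×ˢ (Finset.range (N.2 + 1))).filter
        (fun jk => ε ≤ |a jk.1 jk.2 - l|)).card : ℝ) / (N.1 * N.2))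
    atTop (nhds 0)

/-- A bivariate modulus of continuity. -/
def IsModulus2 (ω : ℝ → ℝ → ℝ) : Prop :=
  (∀ a b, 0 ≤ a → 0 ≤ b → 0 ≤ ω a b) ∧
  (∀ a a' b, 0 ≤ a → a ≤ a' → 0 ≤ b → ω a b ≤ ω a' b) ∧
  (∀ a b b', 0 ≤ a → 0 ≤ b → b ≤ b' → ω a b ≤ ω a b') ∧
  (∀ a a' b, 0 ≤ a → 0 ≤ a' → 0 ≤ b → ω (a + a') b ≤ ω a b + ω a' b) ∧
  (∀ a b b', 0 ≤ a → 0 ≤ b → 0 ≤ b' → ω a (b + b') ≤ ω a b + ω a b') ∧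
  Tendsto (fun d : ℝ × ℝ => ω d.1 d.2)
    (nhdsWithin (0, 0) (Set.Ioi 0 ×ˢ Set.Ioi 0)) (nhds 0)

/-- Membership in the class `H_{ω₂}`. -/
def MemHomega2 (ω g : ℝ → ℝ → ℝ) : Prop :=
  ∀ u₁ v₁ u₂ v₂ : ℝ, 0 ≤ u₁ → 0 ≤ v₁ → 0 ≤ u₂ → 0 ≤ v₂ →
    |g u₁ v₁ - g u₂ v₂| ≤
      ω |u₁ / (1 + u₁) - u₂ / (1 + u₂)| |v₁ / (1 + v₁) - v₂ / (1 + v₂)|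

/-- The bivariate modulus `ω̃(g; δ₁, δ₂)`. -/
def omegaTilde2 (g : ℝ → ℝ → ℝ) (δ₁ δ₂ : ℝ) : ℝ :=
  sSup {d | ∃ t s x y : ℝ, 0 ≤ t ∧ 0 ≤ s ∧ 0 ≤ x ∧ 0 ≤ y ∧
    |t / (1 + t) - x / (1 + x)| ≤ δ₁ ∧ |s / (1 + s) - y / (1 + y)| ≤ δ₂ ∧
    d = |g t s - g x y|}

section Aux

variable {p q : ℝ}

lemma pqInt_pos (hq : 0 < q) (hpq : q < p) {n : ℕ} (hn : 1 ≤ n) : 0 < pqInt p q n := by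
  have : q ^ n < p ^ n := pow_lt_pow_left₀ hpq hq.le (by omega)
  exact div_pos (by linarith) (by linarith)

lemma pqInt_nonneg (hq : 0 < q) (hpq : q < p) (n : ℕ) : 0 ≤ pqInt p q n := by
  cases n with
  | zero => simp [pqInt]
  | succ m => exact (pqInt_pos hq hpq (by omega)).le

lemma pqFact_pos (hq : 0 < q) (hpq : q < p) (n : ℕ) : 0 < pqFact p q n := by
  induction n with
  | zero => norm_num [pqFact]
  | succ m ih => exact mul_pos ih (pqInt_pos hq hpq (by omega))

lemma pqBinom_pos (hq : 0 < q) (hpq : q < p) (n k : ℕ) : 0 < pqBinom p q n k :=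
  div_pos (pqFact_pos hq hpq n) (mul_pos (pqFact_pos hq hpq k) (pqFact_pos hq hpq (n - k)))

lemma pqBinom_zero (hq : 0 < q) (hpq : q < p) (n : ℕ) : pqBinom p q n 0 = 1 := by
  unfold pqBinom
  rw [Nat.sub_zero, show pqFact p q 0 = 1 from rfl, one_mul,
    div_self (pqFact_pos hq hpq n).ne']

lemma pqBinom_self (hq : 0 < q) (hpq : q < p) (n : ℕ) : pqBinom p q n n = 1 := by
  unfold pqBinom
  rw [Nat.sub_self, show pqFact p q 0 = 1 from rfl, mul_one,
    div_self (pqFact_pos hq hpq n).ne']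

lemma pqInt_add (hpq : q < p) (a b : ℕ) :
    pqInt p q (a + b) = p ^ a * pqInt p q b + q ^ b * pqInt p q a := by
  have h : p - q ≠ 0 := by intro h'; linarith [sub_eq_zero.mp h']
  unfold pqInt
  rw [mul_div_assoc', mul_div_assoc', ← add_div]
  congr 1
  ring

lemma pqEll_pos (hq : 0 < q) (hpq : q < p) {x : ℝ} (hx : 0 ≤ x) (n : ℕ) :
    0 < pqEll p q n x := by
  have hp : 0 < p := lt_trans hq hpq
  exact Finset.prod_pos fun s _ => by positivity

lemma pqNode_nonneg (hq : 0 < q) (hpq : q < p) (n k : ℕ) : 0 ≤ pqNode p q n k := by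
  have hp : 0 < p := lt_trans hq hpq
  exact div_nonneg (mul_nonneg (by positivity) (pqInt_nonneg hq hpq k))
    (mul_nonneg (pqInt_pos hq hpq (by omega)).le (by positivity))

lemma pqPascal (hq : 0 < q) (hpq : q < p) (k m : ℕ) :
    pqBinom p q (k + m + 2) (k + 1)
      = p ^ (k + 1) * pqBinom p q (k + m + 1) (k + 1)
        + q ^ (m + 1) * pqBinom p q (k + m + 1) k := by
  have hF : ∀ j, pqFact p q j ≠ 0 := fun j => (pqFact_pos hq hpq j).ne'
  have a1 : pqInt p q (m + 1) ≠ 0 := (pqInt_pos hq hpq (by omega)).ne'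
  have a2 : pqInt p q (k + 1) ≠ 0 := (pqInt_pos hq hpq (by omega)).ne'
  have h1 : pqInt p q (k + m + 2) = p ^ (k+1) * pqInt p q (m+1) + q ^ (m+1) * pqInt p q (k+1) := by
    have := pqInt_add (p := p) (q := q) hpq (k+1) (m+1)
    rw [show k + 1 + (m + 1) = k + m + 2 by omega] at this
    exact this
  have e1 : k + m + 2 - (k + 1) = m + 1 := by omega
  have e2 : k + m + 1 - (k + 1) = m := by omega
  have e3 : k + m + 1 - k = m + 1 := by omega
  unfold pqBinom
  rw [e1, e2, e3]
  rw [show pqFact p q (k+m+2) = pqFact p q (k+m+1) * pqInt p q (k+m+2) from rfl,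
      show pqFact p q (m+1) = pqFact p q m * pqInt p q (m+1) from rfl,
      show pqFact p q (k+1) = pqFact p q k * pqInt p q (k+1) from rfl, h1]
  have a1' : pqInt p q (1+m) ≠ 0 := by rwa [add_comm]
  have a2' : pqInt p q (1+k) ≠ 0 := by rwa [add_comm]
  field_simp

lemma Tsucc (m : ℕ) : (m + 1) * m / 2 = m * (m - 1) / 2 + m := by
  have h2 : (m + 1) * m = m * (m - 1) + 2 * m := by
    cases m with
    | zero => rfl
    | succ n => simp [Nat.succ_sub_one]; ring
  rw [h2, Nat.add_mul_div_left _ _ (by norm_num : 0 < 2)]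

lemma Amid (hq : 0 < q) (hpq : q < p) (k m : ℕ) :
    p ^ ((m+1)*m/2) * q ^ ((k+1)*k/2) * pqBinom p q (k+m+2) (k+1)
      = p ^ (k+m+1) * (p ^ (m*(m-1)/2) * q ^ ((k+1)*k/2) * pqBinom p q (k+m+1) (k+1))
        + q ^ (k+m+1) * (p ^ ((m+1)*m/2) * q ^ (k*(k-1)/2) * pqBinom p q (k+m+1) k) := by
  rw [pqPascal hq hpq k m, Tsucc m, Tsucc k, pow_add, pow_add]
  ring

lemma Amid' (hq : 0 < q) (hpq : q < p) (n k : ℕ) (hk : k < n) :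
    p ^ ((n+1-(k+1)) * (n+1-(k+1)-1) / 2) * q ^ ((k+1) * (k+1-1) / 2) * pqBinom p q (n+1) (k+1)
      = p ^ n * (p ^ ((n-(k+1)) * (n-(k+1)-1) / 2) * q ^ ((k+1) * (k+1-1) / 2) * pqBinom p q n (k+1))
        + q ^ n * (p ^ ((n-k) * (n-k-1) / 2) * q ^ (k * (k-1) / 2) * pqBinom p q n k) := by
  obtain ⟨m, rfl⟩ : ∃ m, n = k + m + 1 := ⟨n - k - 1, by omega⟩
  have e1 : k + m + 1 + 1 - (k+1) = m + 1 := by omega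
  have e3 : k + m + 1 - (k+1) = m := by omega
  have e4 : k + m + 1 - k = m + 1 := by omega
  simp only [e1, e3, e4, Nat.add_sub_cancel]
  exact Amid hq hpq k m

lemma pq_binom_sum (hq : 0 < q) (hpq : q < p) (x : ℝ) (n : ℕ) :
    ∑ k ∈ Finset.range (n + 1),
        p ^ ((n - k) * (n - k - 1) / 2) * q ^ (k * (k - 1) / 2) * pqBinom p q n k * x ^ k
      = pqEll p q n x := by
  induction n with
  | zero =>
      simp [pqEll, pqBinom, pqFact]
  | succ n ih =>
      rw [pqEll, Finset.prod_range_succ, ← pqEll, ← ih, Finset.sum_mul]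
      have hR : ∀ k ∈ Finset.range (n+1),
          (p ^ ((n-k)*(n-k-1)/2) * q ^ (k*(k-1)/2) * pqBinom p q n k * x ^ k) * (p^n + q^n*x)
          = p^n * (p ^ ((n-k)*(n-k-1)/2) * q ^ (k*(k-1)/2) * pqBinom p q n k) * x ^ k
            + q^n * (p ^ ((n-k)*(n-k-1)/2) * q ^ (k*(k-1)/2) * pqBinom p q n k) * x ^ k * x :=
        fun k _ => by ring
      rw [Finset.sum_congr rfl hR, Finset.sum_add_distrib]
      rw [Finset.sum_range_succ'
        (fun k => p^n * (p ^ ((n-k)*(n-k-1)/2) * q ^ (k*(k-1)/2) * pqBinom p q n k) * x ^ k) n]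
      rw [Finset.sum_range_succ
        (fun k => q^n * (p ^ ((n-k)*(n-k-1)/2) * q ^ (k*(k-1)/2) * pqBinom p q n k) * x ^ k * x) n]
      rw [Finset.sum_range_succ'
        (fun k => p ^ ((n+1-k) * (n+1-k-1) / 2) * q ^ (k*(k-1)/2) * pqBinom p q (n+1) k * x ^ k) (n+1)]
      rw [Finset.sum_range_succ
        (fun k => p ^ ((n+1-(k+1)) * (n+1-(k+1)-1) / 2) * q ^ ((k+1)*(k+1-1)/2) * pqBinom p q (n+1) (k+1) * x ^ (k+1)) n]
      have hM : ∀ k ∈ Finset.range n,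
          p ^ ((n+1-(k+1)) * (n+1-(k+1)-1) / 2) * q ^ ((k+1)*(k+1-1)/2) * pqBinom p q (n+1) (k+1) * x ^ (k+1)
          = p^n * (p ^ ((n-(k+1))*(n-(k+1)-1)/2) * q ^ ((k+1)*((k+1)-1)/2) * pqBinom p q n (k+1)) * x ^ (k+1)
            + q^n * (p ^ ((n-k)*(n-k-1)/2) * q ^ (k*(k-1)/2) * pqBinom p q n k) * x ^ k * x := by
        intro k hk
        rw [Amid' hq hpq n k (Finset.mem_range.mp hk)]
        ring
      rw [Finset.sum_congr rfl hM, Finset.sum_add_distrib]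
      -- edge terms
      have top : p ^ ((n+1-(n+1)) * (n+1-(n+1)-1) / 2) * q ^ ((n+1)*(n+1-1)/2) * pqBinom p q (n+1) (n+1) * x ^ (n+1)
          = q^n * (p ^ ((n-n)*(n-n-1)/2) * q ^ (n*(n-1)/2) * pqBinom p q n n) * x ^ n * x := by
        rw [pqBinom_self hq hpq, pqBinom_self hq hpq,
          show n + 1 - 1 = n from rfl, Tsucc n, pow_add]
        simp [Nat.sub_self]
        ring
      have bot : p ^ ((n+1-0) * (n+1-0-1) / 2) * q ^ (0*(0-1)/2) * pqBinom p q (n+1) 0 * x ^ 0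
          = p^n * (p ^ ((n-0)*(n-0-1)/2) * q ^ (0*(0-1)/2) * pqBinom p q n 0) * x ^ 0 := by
        rw [pqBinom_zero hq hpq, pqBinom_zero hq hpq, Nat.sub_zero, Nat.sub_zero,
          show n + 1 - 1 = n from rfl, Tsucc n, pow_add]
        ring
      rw [top, bot]
      ring

end Aux
def wgt (p q : ℝ) (n : ℕ) (x : ℝ) (k : ℕ) : ℝ :=
  (p * q / pqEll p q n x) *
    (p ^ ((n-k)*(n-k-1)/2) * q ^ (k*(k-1)/2) * pqBinom p q n k * x ^ k)

section Aux2

variable {p q : ℝ}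

lemma wgt_nonneg (hq : 0 < q) (hpq : q < p) {x : ℝ} (hx : 0 ≤ x) (n k : ℕ) :
    0 ≤ wgt p q n x k := by
  have hp : 0 < p := lt_trans hq hpq
  have h1 := pqEll_pos hq hpq hx n
  have h2 := (pqBinom_pos hq hpq n k).le
  unfold wgt
  positivity

lemma bbh_eq_sum (p q : ℝ) (n : ℕ) (f : ℝ → ℝ) (x : ℝ) :
    bbh p q n f x = ∑ k ∈ Finset.range (n+1), wgt p q n x k * f (pqNode p q n k) := by
  unfold bbh wgt
  rw [Finset.mul_sum]
  exact Finset.sum_congr rfl fun k _ => by ring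

lemma wgt_sum (hq : 0 < q) (hpq : q < p) {x : ℝ} (hx : 0 ≤ x) (n : ℕ) :
    ∑ k ∈ Finset.range (n+1), wgt p q n x k = p * q := by
  unfold wgt
  rw [← Finset.mul_sum, pq_binom_sum hq hpq x n,
    div_mul_cancel₀ _ (pqEll_pos hq hpq hx n).ne']

end Aux2

lemma ratio_nonneg {u : ℝ} (hu : 0 ≤ u) : 0 ≤ u / (1 + u) := by
  have h1 : (0:ℝ) < 1 + u := by linarith
  positivity

lemma ratio_lt_one {u : ℝ} (hu : 0 ≤ u) : u / (1 + u) < 1 := by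
  have h1 : (0:ℝ) < 1 + u := by linarith
  rw [div_lt_one h1]; linarith

lemma phi_ratio {u : ℝ} (hu : 0 ≤ u) : (u / (1 + u)) / (1 - u / (1 + u)) = u := by
  have h1 : (0:ℝ) < 1 + u := by linarith
  have h2 : 1 - u / (1 + u) = 1 / (1 + u) := by field_simp; ring
  rw [h2]
  field_simp

lemma ratio_phi {v : ℝ} (h0 : 0 ≤ v) (h1 : v < 1) :
    (v / (1 - v)) / (1 + v / (1 - v)) = v := by
  have h : (0:ℝ) < 1 - v := by linarith
  have h2 : 1 + v / (1 - v) = 1 / (1 - v) := by field_simp; ring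
  rw [h2]
  field_simp

lemma phi_nonneg {v : ℝ} (h0 : 0 ≤ v) (h1 : v < 1) : 0 ≤ v / (1 - v) :=
  div_nonneg h0 (by linarith)

lemma convex_mem {a b θ : ℝ} (ha0 : 0 ≤ a) (ha1 : a < 1) (hb0 : 0 ≤ b) (hb1 : b < 1)
    (hθ0 : 0 ≤ θ) (hθ1 : θ ≤ 1) : 0 ≤ a + θ * (b - a) ∧ a + θ * (b - a) < 1 := by
  refine ⟨by nlinarith, ?_⟩
  rcases lt_or_eq_of_le hθ1 with h | h
  · nlinarith [mul_pos (by linarith : (0:ℝ) < 1 - θ) (by linarith : (0:ℝ) < 1 - a),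
      mul_nonneg hθ0 (by linarith : (0:ℝ) ≤ 1 - b)]
  · rw [h]; linarith

lemma abs_telescope (c : ℕ → ℝ) (N : ℕ) :
    |c N - c 0| ≤ ∑ i ∈ Finset.range N, |c (i+1) - c i| := by
  induction N with
  | zero => simp
  | succ n ih =>
      rw [Finset.sum_range_succ]
      have h := abs_sub_le (c (n+1)) (c n) (c 0)
      linarith

section OT

variable {ω f : ℝ → ℝ → ℝ}

lemma ot2_bdd (hω : IsModulus2 ω) (hf : MemHomega2 ω f) (δ₁ δ₂ : ℝ) :
    BddAbove {d | ∃ t s x y : ℝ, 0 ≤ t ∧ 0 ≤ s ∧ 0 ≤ x ∧ 0 ≤ y ∧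
      |t / (1 + t) - x / (1 + x)| ≤ δ₁ ∧ |s / (1 + s) - y / (1 + y)| ≤ δ₂ ∧
      d = |f t s - f x y|} := by
  refine ⟨ω 1 1, ?_⟩
  rintro d ⟨t, s, x, y, ht, hs, hx, hy, -, -, rfl⟩
  have b1 : |t / (1 + t) - x / (1 + x)| ≤ 1 := by
    rw [abs_sub_le_iff]
    constructor <;>
      linarith [ratio_nonneg ht, ratio_lt_one ht, ratio_nonneg hx, ratio_lt_one hx]
  have b2 : |s / (1 + s) - y / (1 + y)| ≤ 1 := by
    rw [abs_sub_le_iff]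
    constructor <;>
      linarith [ratio_nonneg hs, ratio_lt_one hs, ratio_nonneg hy, ratio_lt_one hy]
  calc |f t s - f x y| ≤ ω |t / (1 + t) - x / (1 + x)| |s / (1 + s) - y / (1 + y)| :=
        hf t s x y ht hs hx hy
    _ ≤ ω 1 |s / (1 + s) - y / (1 + y)| := hω.2.1 _ 1 _ (abs_nonneg _) b1 (abs_nonneg _)
    _ ≤ ω 1 1 := hω.2.2.1 1 _ 1 zero_le_one (abs_nonneg _) b2

lemma ot2_mem_le (hω : IsModulus2 ω) (hf : MemHomega2 ω f) {δ₁ δ₂ t s x y : ℝ}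
    (ht : 0 ≤ t) (hs : 0 ≤ s) (hx : 0 ≤ x) (hy : 0 ≤ y)
    (h1 : |t / (1 + t) - x / (1 + x)| ≤ δ₁) (h2 : |s / (1 + s) - y / (1 + y)| ≤ δ₂) :
    |f t s - f x y| ≤ omegaTilde2 f δ₁ δ₂ :=
  le_csSup (ot2_bdd hω hf δ₁ δ₂) ⟨t, s, x, y, ht, hs, hx, hy, h1, h2, rfl⟩

lemma ot2_nonneg (hω : IsModulus2 ω) (hf : MemHomega2 ω f) {δ₁ δ₂ : ℝ}
    (hδ₁ : 0 ≤ δ₁) (hδ₂ : 0 ≤ δ₂) : 0 ≤ omegaTilde2 f δ₁ δ₂ := by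
  have h := ot2_mem_le hω hf le_rfl le_rfl le_rfl le_rfl
    (by simpa using hδ₁) (by simpa using hδ₂) (t := 0) (s := 0) (x := 0) (y := 0)
  simpa using h

lemma ot2_chain (hω : IsModulus2 ω) (hf : MemHomega2 ω f) {δ₁ δ₂ : ℝ}
    (hδ₁ : 0 ≤ δ₁) (hδ₂ : 0 ≤ δ₂) {t s x y : ℝ}
    (ht : 0 ≤ t) (hs : 0 ≤ s) (hx : 0 ≤ x) (hy : 0 ≤ y) (N : ℕ) (hN : 1 ≤ N)
    (h1 : |t / (1 + t) - x / (1 + x)| ≤ N * δ₁)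
    (h2 : |s / (1 + s) - y / (1 + y)| ≤ N * δ₂) :
    |f t s - f x y| ≤ N * omegaTilde2 f δ₁ δ₂ := by
  have hN0 : (0:ℝ) < N := by positivity
  set T := t / (1 + t) with hT
  set X := x / (1 + x) with hX
  set S := s / (1 + s) with hS
  set Y := y / (1 + y) with hY
  set u : ℕ → ℝ := fun i => X + ((i : ℝ) / N) * (T - X) with hu
  set v : ℕ → ℝ := fun i => Y + ((i : ℝ) / N) * (S - Y) with hv
  have humem : ∀ i, i ≤ N → 0 ≤ u i ∧ u i < 1 := by
    intro i hi
    exact convex_mem (ratio_nonneg hx) (ratio_lt_one hx) (ratio_nonneg ht) (ratio_lt_one ht)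
      (by positivity) (by rw [div_le_one hN0]; exact_mod_cast hi)
  have hvmem : ∀ i, i ≤ N → 0 ≤ v i ∧ v i < 1 := by
    intro i hi
    exact convex_mem (ratio_nonneg hy) (ratio_lt_one hy) (ratio_nonneg hs) (ratio_lt_one hs)
      (by positivity) (by rw [div_le_one hN0]; exact_mod_cast hi)
  set c : ℕ → ℝ := fun i => f (u i / (1 - u i)) (v i / (1 - v i)) with hc
  have hu0 : u 0 = X := by simp [hu]
  have hv0 : v 0 = Y := by simp [hv]
  have huN : u N = T := by
    simp only [hu]
    rw [div_self hN0.ne']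
    ring
  have hvN : v N = S := by
    simp only [hv]
    rw [div_self hN0.ne']
    ring
  have hc0 : c 0 = f x y := by
    simp only [hc, hu0, hv0, hX, hY, phi_ratio hx, phi_ratio hy]
  have hcN : c N = f t s := by
    simp only [hc, huN, hvN, hT, hS, phi_ratio ht, phi_ratio hs]
  have step : ∀ i ∈ Finset.range N, |c (i+1) - c i| ≤ omegaTilde2 f δ₁ δ₂ := by
    intro i hi
    have hiN : i ≤ N := (Finset.mem_range.mp hi).le
    have hi1N : i + 1 ≤ N := Finset.mem_range.mp hi
    obtain ⟨hu1, hu2⟩ := humem i hiN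
    obtain ⟨hu1', hu2'⟩ := humem (i+1) hi1N
    obtain ⟨hv1, hv2⟩ := hvmem i hiN
    obtain ⟨hv1', hv2'⟩ := hvmem (i+1) hi1N
    have hdiff : ∀ a b : ℝ, (X + (((i:ℝ)+1) / N) * (a - b)) - (X + ((i:ℝ) / N) * (a - b))
        = (a - b) / N := by intro a b; field_simp; ring
    apply ot2_mem_le hω hf (phi_nonneg hu1' hu2') (phi_nonneg hv1' hv2')
      (phi_nonneg hu1 hu2) (phi_nonneg hv1 hv2)
    · rw [ratio_phi hu1' hu2', ratio_phi hu1 hu2]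
      have : u (i+1) - u i = (T - X) / N := by
        simp only [hu]
        push_cast
        field_simp
        ring
      rw [this, abs_div, abs_of_pos hN0, div_le_iff₀ hN0]
      linarith [h1]
    · rw [ratio_phi hv1' hv2', ratio_phi hv1 hv2]
      have : v (i+1) - v i = (S - Y) / N := by
        simp only [hv]
        push_cast
        field_simp
        ring
      rw [this, abs_div, abs_of_pos hN0, div_le_iff₀ hN0]
      linarith [h2]
  calc |f t s - f x y| = |c N - c 0| := by rw [hc0, hcN]
    _ ≤ ∑ i ∈ Finset.range N, |c (i+1) - c i| := abs_telescope c N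
    _ ≤ ∑ _i ∈ Finset.range N, omegaTilde2 f δ₁ δ₂ := Finset.sum_le_sum step
    _ = N * omegaTilde2 f δ₁ δ₂ := by rw [Finset.sum_const, Finset.card_range, nsmul_eq_mul]

end OT
lemma Nbound {a b : ℝ} (ha : 0 ≤ a) (hb : 0 ≤ b) :
    ((max ⌈a⌉₊ (max ⌈b⌉₊ 1) : ℕ) : ℝ) ≤ 2 + a^2/2 + b^2/2 := by
  push_cast [Nat.cast_max]
  refine max_le ?_ (max_le ?_ ?_)
  · nlinarith [Nat.ceil_lt_add_one ha, sq_nonneg (a-1), sq_nonneg b]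
  · nlinarith [Nat.ceil_lt_add_one hb, sq_nonneg (b-1), sq_nonneg a]
  · nlinarith [sq_nonneg a, sq_nonneg b]

lemma per_core {ω f : ℝ → ℝ → ℝ} (hω : IsModulus2 ω) (hf : MemHomega2 ω f)
    {D₁ D₂ : ℝ} (hD₁ : 0 ≤ D₁) (hD₂ : 0 ≤ D₂)
    {t s x y : ℝ} (ht : 0 ≤ t) (hs : 0 ≤ s) (hx : 0 ≤ x) (hy : 0 ≤ y)
    (hz₁ : D₁ = 0 → (t/(1+t) - x/(1+x))^2 = 0)
    (hz₂ : D₂ = 0 → (s/(1+s) - y/(1+y))^2 = 0) :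
    |f t s - f x y| ≤
      (2 + (t/(1+t) - x/(1+x))^2/(2*D₁) + (s/(1+s) - y/(1+y))^2/(2*D₂)) *
        omegaTilde2 f (Real.sqrt D₁) (Real.sqrt D₂) := by
  set δ₁ := Real.sqrt D₁ with hδ₁
  set δ₂ := Real.sqrt D₂ with hδ₂
  set Δ₁ := |t/(1+t) - x/(1+x)| with hΔ₁
  set Δ₂ := |s/(1+s) - y/(1+y)| with hΔ₂
  have hΔ₁0 : 0 ≤ Δ₁ := abs_nonneg _
  have hΔ₂0 : 0 ≤ Δ₂ := abs_nonneg _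
  set N := max ⌈Δ₁/δ₁⌉₊ (max ⌈Δ₂/δ₂⌉₊ 1) with hN
  have hN1 : 1 ≤ N := le_trans (le_max_right _ 1) (le_max_right _ _)
  have cond₁ : Δ₁ ≤ N * δ₁ := by
    rcases hD₁.eq_or_lt with h0 | hpos
    · have hz : Δ₁ = 0 := by
        rw [hΔ₁, abs_eq_zero]
        exact pow_eq_zero_iff (two_ne_zero) |>.mp (hz₁ h0.symm)
      rw [hz]
      have : (0:ℝ) ≤ δ₁ := Real.sqrt_nonneg _
      positivity
    · have hδpos : 0 < δ₁ := Real.sqrt_pos.mpr hpos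
      have h1 : Δ₁/δ₁ ≤ (N:ℝ) :=
        le_trans (Nat.le_ceil _) (by exact_mod_cast le_max_left ⌈Δ₁/δ₁⌉₊ (max ⌈Δ₂/δ₂⌉₊ 1))
      exact (div_le_iff₀ hδpos).mp h1
  have cond₂ : Δ₂ ≤ N * δ₂ := by
    rcases hD₂.eq_or_lt with h0 | hpos
    · have hz : Δ₂ = 0 := by
        rw [hΔ₂, abs_eq_zero]
        exact pow_eq_zero_iff (two_ne_zero) |>.mp (hz₂ h0.symm)
      rw [hz]
      have : (0:ℝ) ≤ δ₂ := Real.sqrt_nonneg _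
      positivity
    · have hδpos : 0 < δ₂ := Real.sqrt_pos.mpr hpos
      have h1 : Δ₂/δ₂ ≤ (N:ℝ) :=
        le_trans (Nat.le_ceil _)
          (by exact_mod_cast le_trans (le_max_left ⌈Δ₂/δ₂⌉₊ 1) (le_max_right ⌈Δ₁/δ₁⌉₊ _))
      exact (div_le_iff₀ hδpos).mp h1
  have e₁ : (t/(1+t) - x/(1+x))^2/(2*D₁) = (Δ₁/δ₁)^2/2 := by
    rcases hD₁.eq_or_lt with h0 | hpos
    · have hz : Δ₁ = 0 := by
        rw [hΔ₁, abs_eq_zero]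
        exact pow_eq_zero_iff (two_ne_zero) |>.mp (hz₁ h0.symm)
      rw [hz₁ h0.symm, hz]
      simp
    · have hδsq : δ₁^2 = D₁ := Real.sq_sqrt hD₁
      rw [div_pow, hδsq, hΔ₁, sq_abs]
      ring
  have e₂ : (s/(1+s) - y/(1+y))^2/(2*D₂) = (Δ₂/δ₂)^2/2 := by
    rcases hD₂.eq_or_lt with h0 | hpos
    · have hz : Δ₂ = 0 := by
        rw [hΔ₂, abs_eq_zero]
        exact pow_eq_zero_iff (two_ne_zero) |>.mp (hz₂ h0.symm)
      rw [hz₂ h0.symm, hz]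
      simp
    · have hδsq : δ₂^2 = D₂ := Real.sq_sqrt hD₂
      rw [div_pow, hδsq, hΔ₂, sq_abs]
      ring
  have hNle : (N:ℝ) ≤ 2 + (t/(1+t) - x/(1+x))^2/(2*D₁) + (s/(1+s) - y/(1+y))^2/(2*D₂) := by
    rw [e₁, e₂]
    exact Nbound (div_nonneg hΔ₁0 (Real.sqrt_nonneg _)) (div_nonneg hΔ₂0 (Real.sqrt_nonneg _))
  calc |f t s - f x y| ≤ N * omegaTilde2 f δ₁ δ₂ :=
        ot2_chain hω hf (Real.sqrt_nonneg _) (Real.sqrt_nonneg _) ht hs hx hy N hN1 cond₁ cond₂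
    _ ≤ _ := mul_le_mul_of_nonneg_right hNle
        (ot2_nonneg hω hf (Real.sqrt_nonneg _) (Real.sqrt_nonneg _))

lemma double_sum_mul (s t : Finset ℕ) (u v : ℕ → ℝ) (c : ℝ) :
    ∑ i ∈ s, ∑ j ∈ t, c * (u i * v j) = c * ((∑ i ∈ s, u i) * (∑ j ∈ t, v j)) := by
  rw [Finset.sum_mul_sum, Finset.mul_sum]
  exact Finset.sum_congr rfl fun i _ => by rw [Finset.mul_sum]
set_option maxHeartbeats 1000000
/-- Theorem 5.4, bivariate rate of convergence. -/
theorem bbh2_rate_of_convergence (n₁ n₂ : ℕ) (hn₁ : 1 ≤ n₁) (hn₂ : 1 ≤ n₂)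
    (p₁ p₂ q₁ q₂ : ℝ)
    (hq₁ : 0 < q₁) (hqp₁ : q₁ < p₁) (hp₁ : p₁ ≤ 1)
    (hq₂ : 0 < q₂) (hqp₂ : q₂ < p₂) (hp₂ : p₂ ≤ 1)
    (ω : ℝ → ℝ → ℝ) (hω : IsModulus2 ω)
    (f : ℝ → ℝ → ℝ) (hf : MemHomega2 ω f)
    (x y : ℝ) (hx : 0 ≤ x) (hy : 0 ≤ y) :
    |bbh2 p₁ p₂ q₁ q₂ n₁ n₂ f x y - p₁ * q₁ * p₂ * q₂ * f x y| ≤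
      4 * omegaTilde2 f
        (Real.sqrt ((1 / (p₁ * q₁)) *
          bbh p₁ q₁ n₁ (fun t => (t / (1 + t) - x / (1 + x)) ^ 2) x))
        (Real.sqrt ((1 / (p₂ * q₂)) *
          bbh p₂ q₂ n₂ (fun s => (s / (1 + s) - y / (1 + y)) ^ 2) y)) := by
  have hp₁' : 0 < p₁ := lt_trans hq₁ hqp₁
  have hp₂' : 0 < p₂ := lt_trans hq₂ hqp₂
  set g₁ : ℝ → ℝ := fun t => (t / (1 + t) - x / (1 + x)) ^ 2 with hg₁
  set g₂ : ℝ → ℝ := fun s => (s / (1 + s) - y / (1 + y)) ^ 2 with hg₂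
  set D₁ := 1 / (p₁ * q₁) * bbh p₁ q₁ n₁ g₁ x with hD₁def
  set D₂ := 1 / (p₂ * q₂) * bbh p₂ q₂ n₂ g₂ y with hD₂def
  set OT := omegaTilde2 f (Real.sqrt D₁) (Real.sqrt D₂) with hOTdef
  set w₁ : ℕ → ℝ := wgt p₁ q₁ n₁ x with hw₁def
  set w₂ : ℕ → ℝ := wgt p₂ q₂ n₂ y with hw₂def
  set t₁ : ℕ → ℝ := pqNode p₁ q₁ n₁ with ht₁def
  set t₂ : ℕ → ℝ := pqNode p₂ q₂ n₂ with ht₂def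
  have hw₁ : ∀ k, 0 ≤ w₁ k := fun k => wgt_nonneg hq₁ hqp₁ hx n₁ k
  have hw₂ : ∀ k, 0 ≤ w₂ k := fun k => wgt_nonneg hq₂ hqp₂ hy n₂ k
  have ht₁ : ∀ k, 0 ≤ t₁ k := fun k => pqNode_nonneg hq₁ hqp₁ n₁ k
  have ht₂ : ∀ k, 0 ≤ t₂ k := fun k => pqNode_nonneg hq₂ hqp₂ n₂ k
  have hg₁nn : ∀ u, 0 ≤ g₁ u := fun u => by simp only [hg₁]; positivity
  have hg₂nn : ∀ u, 0 ≤ g₂ u := fun u => by simp only [hg₂]; positivity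
  have hS₁ : ∑ k ∈ Finset.range (n₁+1), w₁ k = p₁ * q₁ := wgt_sum hq₁ hqp₁ hx n₁
  have hS₂ : ∑ k ∈ Finset.range (n₂+1), w₂ k = p₂ * q₂ := wgt_sum hq₂ hqp₂ hy n₂
  have hb₁ : bbh p₁ q₁ n₁ g₁ x = ∑ k ∈ Finset.range (n₁+1), w₁ k * g₁ (t₁ k) :=
    bbh_eq_sum p₁ q₁ n₁ g₁ x
  have hb₂ : bbh p₂ q₂ n₂ g₂ y = ∑ k ∈ Finset.range (n₂+1), w₂ k * g₂ (t₂ k) :=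
    bbh_eq_sum p₂ q₂ n₂ g₂ y
  have hA₁ : ∑ k ∈ Finset.range (n₁+1), w₁ k * g₁ (t₁ k) = p₁ * q₁ * D₁ := by
    rw [hD₁def, ← hb₁]
    field_simp
  have hA₂ : ∑ k ∈ Finset.range (n₂+1), w₂ k * g₂ (t₂ k) = p₂ * q₂ * D₂ := by
    rw [hD₂def, ← hb₂]
    field_simp
  have hD₁0 : 0 ≤ D₁ := by
    rw [hD₁def, hb₁]
    exact mul_nonneg (by positivity)
      (Finset.sum_nonneg fun k _ => mul_nonneg (hw₁ k) (hg₁nn _))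
  have hD₂0 : 0 ≤ D₂ := by
    rw [hD₂def, hb₂]
    exact mul_nonneg (by positivity)
      (Finset.sum_nonneg fun k _ => mul_nonneg (hw₂ k) (hg₂nn _))
  have hz₁ : D₁ = 0 → ∀ k ∈ Finset.range (n₁+1), w₁ k ≠ 0 → g₁ (t₁ k) = 0 := by
    intro h0 k hk hne
    have hsum0 : ∑ k ∈ Finset.range (n₁+1), w₁ k * g₁ (t₁ k) = 0 := by
      rw [hA₁, h0, mul_zero]
    have := (Finset.sum_eq_zero_iff_of_nonneg
      (fun k _ => mul_nonneg (hw₁ k) (hg₁nn (t₁ k)))).mp hsum0 k hk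
    exact (mul_eq_zero.mp this).resolve_left hne
  have hz₂ : D₂ = 0 → ∀ k ∈ Finset.range (n₂+1), w₂ k ≠ 0 → g₂ (t₂ k) = 0 := by
    intro h0 k hk hne
    have hsum0 : ∑ k ∈ Finset.range (n₂+1), w₂ k * g₂ (t₂ k) = 0 := by
      rw [hA₂, h0, mul_zero]
    have := (Finset.sum_eq_zero_iff_of_nonneg
      (fun k _ => mul_nonneg (hw₂ k) (hg₂nn (t₂ k)))).mp hsum0 k hk
    exact (mul_eq_zero.mp this).resolve_left hne
  have hOT0 : 0 ≤ OT := ot2_nonneg hω hf (Real.sqrt_nonneg _) (Real.sqrt_nonneg _)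
  have e1 : bbh2 p₁ p₂ q₁ q₂ n₁ n₂ f x y
      = ∑ k₁ ∈ Finset.range (n₁+1), ∑ k₂ ∈ Finset.range (n₂+1),
          w₁ k₁ * w₂ k₂ * f (t₁ k₁) (t₂ k₂) := by
    simp only [hw₁def, hw₂def, ht₁def, ht₂def]
    unfold bbh2 wgt
    rw [Finset.mul_sum]
    refine Finset.sum_congr rfl fun k₁ _ => ?_
    rw [Finset.mul_sum]
    refine Finset.sum_congr rfl fun k₂ _ => ?_
    ring
  have e2 : ∑ k₁ ∈ Finset.range (n₁+1), ∑ k₂ ∈ Finset.range (n₂+1),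
      w₁ k₁ * w₂ k₂ * f x y = p₁ * q₁ * p₂ * q₂ * f x y := by
    calc ∑ k₁ ∈ Finset.range (n₁+1), ∑ k₂ ∈ Finset.range (n₂+1),
          w₁ k₁ * w₂ k₂ * f x y
        = ∑ k₁ ∈ Finset.range (n₁+1), ∑ k₂ ∈ Finset.range (n₂+1),
          f x y * (w₁ k₁ * w₂ k₂) := by
          exact Finset.sum_congr rfl fun k₁ _ => Finset.sum_congr rfl fun k₂ _ => by ring
      _ = f x y * ((∑ k ∈ Finset.range (n₁+1), w₁ k) * (∑ k ∈ Finset.range (n₂+1), w₂ k)) :=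
          double_sum_mul _ _ _ _ _
      _ = p₁ * q₁ * p₂ * q₂ * f x y := by rw [hS₁, hS₂]; ring
  have key : bbh2 p₁ p₂ q₁ q₂ n₁ n₂ f x y - p₁ * q₁ * p₂ * q₂ * f x y
      = ∑ k₁ ∈ Finset.range (n₁+1), ∑ k₂ ∈ Finset.range (n₂+1),
          w₁ k₁ * w₂ k₂ * (f (t₁ k₁) (t₂ k₂) - f x y) := by
    rw [e1, ← e2, ← Finset.sum_sub_distrib]
    refine Finset.sum_congr rfl fun k₁ _ => ?_
    rw [← Finset.sum_sub_distrib]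
    exact Finset.sum_congr rfl fun k₂ _ => by ring
  have per : ∀ k₁ ∈ Finset.range (n₁+1), ∀ k₂ ∈ Finset.range (n₂+1),
      |w₁ k₁ * w₂ k₂ * (f (t₁ k₁) (t₂ k₂) - f x y)|
        ≤ w₁ k₁ * w₂ k₂ * ((2 + g₁ (t₁ k₁)/(2*D₁) + g₂ (t₂ k₂)/(2*D₂)) * OT) := by
    intro k₁ hk₁ k₂ hk₂
    rw [abs_mul, abs_mul, abs_of_nonneg (hw₁ k₁), abs_of_nonneg (hw₂ k₂)]
    by_cases hne₁ : w₁ k₁ = 0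
    · rw [hne₁]; simp
    by_cases hne₂ : w₂ k₂ = 0
    · rw [hne₂]; simp
    refine mul_le_mul_of_nonneg_left ?_ (mul_nonneg (hw₁ k₁) (hw₂ k₂))
    have hcore := per_core hω hf hD₁0 hD₂0 (ht₁ k₁) (ht₂ k₂) hx hy
      (fun h0 => by simpa [hg₁] using hz₁ h0 k₁ hk₁ hne₁)
      (fun h0 => by simpa [hg₂] using hz₂ h0 k₂ hk₂ hne₂)
    simpa [hg₁, hg₂] using hcore
  have split : ∑ k₁ ∈ Finset.range (n₁+1), ∑ k₂ ∈ Finset.range (n₂+1),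
      w₁ k₁ * w₂ k₂ * ((2 + g₁ (t₁ k₁)/(2*D₁) + g₂ (t₂ k₂)/(2*D₂)) * OT)
      = OT*2*((p₁*q₁)*(p₂*q₂)) + OT/(2*D₁)*((p₁*q₁*D₁)*(p₂*q₂))
        + OT/(2*D₂)*((p₁*q₁)*(p₂*q₂*D₂)) := by
    calc ∑ k₁ ∈ Finset.range (n₁+1), ∑ k₂ ∈ Finset.range (n₂+1),
          w₁ k₁ * w₂ k₂ * ((2 + g₁ (t₁ k₁)/(2*D₁) + g₂ (t₂ k₂)/(2*D₂)) * OT)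
        = ∑ k₁ ∈ Finset.range (n₁+1), ∑ k₂ ∈ Finset.range (n₂+1),
          ((OT*2) * (w₁ k₁ * w₂ k₂)
            + (OT/(2*D₁)) * ((w₁ k₁ * g₁ (t₁ k₁)) * w₂ k₂)
            + (OT/(2*D₂)) * (w₁ k₁ * (w₂ k₂ * g₂ (t₂ k₂)))) := by
          exact Finset.sum_congr rfl fun k₁ _ => Finset.sum_congr rfl fun k₂ _ => by ring
      _ = (∑ k₁ ∈ Finset.range (n₁+1), ∑ k₂ ∈ Finset.range (n₂+1),
            (OT*2) * (w₁ k₁ * w₂ k₂))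
          + (∑ k₁ ∈ Finset.range (n₁+1), ∑ k₂ ∈ Finset.range (n₂+1),
            (OT/(2*D₁)) * ((w₁ k₁ * g₁ (t₁ k₁)) * w₂ k₂))
          + (∑ k₁ ∈ Finset.range (n₁+1), ∑ k₂ ∈ Finset.range (n₂+1),
            (OT/(2*D₂)) * (w₁ k₁ * (w₂ k₂ * g₂ (t₂ k₂)))) := by
          simp only [Finset.sum_add_distrib]
      _ = (OT*2)*((∑ k ∈ Finset.range (n₁+1), w₁ k) * (∑ k ∈ Finset.range (n₂+1), w₂ k))
          + (OT/(2*D₁))*((∑ k ∈ Finset.range (n₁+1), w₁ k * g₁ (t₁ k))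
              * (∑ k ∈ Finset.range (n₂+1), w₂ k))
          + (OT/(2*D₂))*((∑ k ∈ Finset.range (n₁+1), w₁ k)
              * (∑ k ∈ Finset.range (n₂+1), w₂ k * g₂ (t₂ k))) := by
          rw [double_sum_mul, double_sum_mul, double_sum_mul]
      _ = _ := by rw [hS₁, hS₂, hA₁, hA₂]
  have hPq₁ : p₁ * q₁ ≤ 1 := mul_le_one₀ hp₁ hq₁.le (by linarith)
  have hPq₂ : p₂ * q₂ ≤ 1 := mul_le_one₀ hp₂ hq₂.le (by linarith)
  have term2 : OT/(2*D₁)*((p₁*q₁*D₁)*(p₂*q₂)) ≤ OT*((p₁*q₁)*(p₂*q₂))/2 := by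
    rcases hD₁0.eq_or_lt with h0 | hpos
    · rw [← h0]
      simp
      positivity
    · have heq : OT/(2*D₁)*((p₁*q₁*D₁)*(p₂*q₂)) = OT*((p₁*q₁)*(p₂*q₂))/2 := by
        field_simp
      rw [heq]
  have term3 : OT/(2*D₂)*((p₁*q₁)*(p₂*q₂*D₂)) ≤ OT*((p₁*q₁)*(p₂*q₂))/2 := by
    rcases hD₂0.eq_or_lt with h0 | hpos
    · rw [← h0]
      simp
      positivity
    · have heq : OT/(2*D₂)*((p₁*q₁)*(p₂*q₂*D₂)) = OT*((p₁*q₁)*(p₂*q₂))/2 := by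
        field_simp
      rw [heq]
  have hPOT : OT*((p₁*q₁)*(p₂*q₂)) ≤ OT := by
    nlinarith [mul_pos (mul_pos hp₁' hq₁) (mul_pos hp₂' hq₂),
      mul_le_one₀ hPq₁ (mul_pos hp₂' hq₂).le hPq₂]
  calc |bbh2 p₁ p₂ q₁ q₂ n₁ n₂ f x y - p₁ * q₁ * p₂ * q₂ * f x y|
      = |∑ k₁ ∈ Finset.range (n₁+1), ∑ k₂ ∈ Finset.range (n₂+1),
          w₁ k₁ * w₂ k₂ * (f (t₁ k₁) (t₂ k₂) - f x y)| := by rw [key]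
    _ ≤ ∑ k₁ ∈ Finset.range (n₁+1), |∑ k₂ ∈ Finset.range (n₂+1),
          w₁ k₁ * w₂ k₂ * (f (t₁ k₁) (t₂ k₂) - f x y)| := Finset.abs_sum_le_sum_abs _ _
    _ ≤ ∑ k₁ ∈ Finset.range (n₁+1), ∑ k₂ ∈ Finset.range (n₂+1),
          |w₁ k₁ * w₂ k₂ * (f (t₁ k₁) (t₂ k₂) - f x y)| :=
        Finset.sum_le_sum fun k₁ _ => Finset.abs_sum_le_sum_abs _ _
    _ ≤ ∑ k₁ ∈ Finset.range (n₁+1), ∑ k₂ ∈ Finset.range (n₂+1),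
          w₁ k₁ * w₂ k₂ * ((2 + g₁ (t₁ k₁)/(2*D₁) + g₂ (t₂ k₂)/(2*D₂)) * OT) :=
        Finset.sum_le_sum fun k₁ hk₁ => Finset.sum_le_sum fun k₂ hk₂ => per k₁ hk₁ k₂ hk₂
    _ = OT*2*((p₁*q₁)*(p₂*q₂)) + OT/(2*D₁)*((p₁*q₁*D₁)*(p₂*q₂))
          + OT/(2*D₂)*((p₁*q₁)*(p₂*q₂*D₂)) := split
    _ ≤ 4 * OT := by nlinarith [term2, term3, hPOT, hOT0]
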